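/- For any r ∈ ℕ, any two distinct natural numbers a, b, and any 2-coloring φ: ℕ → {1,2}, there exist sets B, C ⊆ ℕ with |B| = r and |C| infinite, and a color i ∈ {1,2}, such that φ(x) = i for all x ∈ B + aC and all x ∈ B + bC (where B + aC = {β + a·γ : β ∈ B, γ ∈ C}). -/

import Mathlib

namespace MonoSS


/-- An unbounded set of naturals is infinite. -/
lemma infinite_of_forall_ge {C : Set ℕ} (h : ∀ G : ℕ, ∃ γ, G ≤ γ ∧ γ ∈ C) :
    C.Infinite := by
  by_contra hInf
  have hFin : C.Finite := Set.not_infinite.mp hInf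
  rcases hFin.bddAbove with ⟨n, hn⟩
  rcases h (n+1) with ⟨γ, hγ1, hγ2⟩
  have := hn hγ2
  omega

/-- Infinite pigeonhole: an infinite set mapped into a finite set has an infinite fiber. -/
lemma inf_fiber {α : Type*} {S : Set ℕ} (hS : S.Infinite) (f : ℕ → α) (F : Finset α)
    (hf : ∀ γ ∈ S, f γ ∈ F) : ∃ c ∈ F, {γ | γ ∈ S ∧ f γ = c}.Infinite := by
  by_contra h
  push_neg at h
  have hcov : S ⊆ ⋃ c ∈ F, {γ | γ ∈ S ∧ f γ = c} := by
    intro γ hγ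
    exact Set.mem_biUnion (hf γ hγ) ⟨hγ, rfl⟩
  have hfin : (⋃ c ∈ F, {γ | γ ∈ S ∧ f γ = c}).Finite := by
    refine Set.Finite.biUnion F.finite_toSet ?_
    intro c hc
    by_cases hcF : c ∈ F
    · exact h c hcF
    · exact absurd hc hcF
  exact hS (hfin.subset hcov)




open Finset

/-- Double counting: if a 2-valued function on `[0,M)` disagrees with each of its
shifts at few points, then one of the two values is rare. -/
lemma minority (f : ℕ → ℕ) (M K : ℕ) (hval : ∀ s < M, f s = 1 ∨ f s = 2)
    (h : ∀ u, 1 ≤ u → u < M →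
      ((Finset.range M).filter (fun s => s + u < M ∧ f s ≠ f (s + u))).card ≤ K) :
    min ((Finset.range M).filter (fun s => f s = 1)).card
        ((Finset.range M).filter (fun s => f s = 2)).card ≤ 2 * K := by
  set C1 := (Finset.range M).filter (fun s => f s = 1) with hC1
  set C2 := (Finset.range M).filter (fun s => f s = 2) with hC2
  set PAIRS := (Finset.range M ×ˢ Finset.range M).filter
      (fun p => p.1 < p.2 ∧ f p.1 ≠ f p.2) with hP
  -- (α) c1 * c2 ≤ PAIRS.card
  have hinj : C1.card * C2.card ≤ PAIRS.card := by
    rw [← Finset.card_product]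
    apply Finset.card_le_card_of_injOn (fun p => (min p.1 p.2, max p.1 p.2))
    · rintro ⟨u, v⟩ huv
      simp only [Finset.mem_coe, Finset.mem_product, hC1, hC2, Finset.mem_filter, Finset.mem_range] at huv
      obtain ⟨⟨hu1, hu2⟩, hv1, hv2⟩ := huv
      have hne : u ≠ v := by intro h'; rw [h'] at hu2; omega
      simp only [Finset.mem_coe, hP, Finset.mem_filter, Finset.mem_product, Finset.mem_range]
      rcases lt_or_gt_of_ne hne with h' | h'
      · rw [min_eq_left h'.le, max_eq_right h'.le]
        exact ⟨⟨hu1, hv1⟩, h', by omega⟩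
      · rw [min_eq_right h'.le, max_eq_left h'.le]
        exact ⟨⟨hv1, hu1⟩, h', by omega⟩
    · rintro ⟨u, v⟩ huv ⟨u', v'⟩ huv' heq
      simp only [Finset.mem_coe, Finset.mem_product, hC1, hC2, Finset.mem_filter] at huv huv'
      simp only [Prod.mk.injEq] at heq
      have hcase : (u = u' ∧ v = v') ∨ (u = v' ∧ v = u') := by omega
      rcases hcase with ⟨h1, h2⟩ | ⟨h1, h2⟩
      · simp [h1, h2]
      · exfalso
        have e1 := huv.1.2
        have e2 := huv'.2.2
        rw [← h1] at e2
        omega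
  -- (β) PAIRS.card ≤ K * M
  have hsum : PAIRS.card ≤ K * M := by
    have hsub : PAIRS ⊆ (Finset.Ico 1 M).biUnion (fun u =>
        ((Finset.range M).filter (fun s => s + u < M ∧ f s ≠ f (s + u))).image
          (fun s => (s, s + u))) := by
      rintro ⟨s, s'⟩ hp
      simp only [hP, Finset.mem_filter, Finset.mem_product, Finset.mem_range] at hp
      obtain ⟨⟨hs, hs'⟩, hlt, hne⟩ := hp
      refine Finset.mem_biUnion.mpr ⟨s' - s, ?_, ?_⟩
      · simp only [Finset.mem_Ico]; omega
      · refine Finset.mem_image.mpr ⟨s, ?_, ?_⟩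
        · simp only [Finset.mem_filter, Finset.mem_range]
          refine ⟨hs, by omega, ?_⟩
          have : s + (s' - s) = s' := by omega
          rw [this]; exact hne
        · have : s + (s' - s) = s' := by omega
          rw [this]
    calc PAIRS.card ≤ _ := Finset.card_le_card hsub
    _ ≤ ∑ u ∈ Finset.Ico 1 M, (((Finset.range M).filter
          (fun s => s + u < M ∧ f s ≠ f (s + u))).image (fun s => (s, s + u))).card :=
        Finset.card_biUnion_le
    _ ≤ ∑ u ∈ Finset.Ico 1 M, K := by
        apply Finset.sum_le_sum
        intro u hu
        simp only [Finset.mem_Ico] at hu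
        exact le_trans Finset.card_image_le (h u hu.1 hu.2)
    _ ≤ K * M := by
        rw [Finset.sum_const, smul_eq_mul]
        have : (Finset.Ico 1 M).card ≤ M := by
          rw [Nat.card_Ico]; omega
        calc (Finset.Ico 1 M).card * K ≤ M * K := Nat.mul_le_mul_right K this
        _ = K * M := Nat.mul_comm M K
  -- (γ) conclude
  have hpart : C1.card + C2.card = M := by
    have hunion : C1 ∪ C2 = Finset.range M := by
      apply Finset.Subset.antisymm
      · apply Finset.union_subset <;> exact Finset.filter_subset _ _
      · intro s hs
        rcases hval s (Finset.mem_range.mp hs) with h' | h'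
        · exact Finset.mem_union_left _ (Finset.mem_filter.mpr ⟨hs, h'⟩)
        · exact Finset.mem_union_right _ (Finset.mem_filter.mpr ⟨hs, h'⟩)
    have hdisj : Disjoint C1 C2 := by
      rw [Finset.disjoint_filter]
      intro s _ h1 h2
      omega
    rw [← Finset.card_union_of_disjoint hdisj, hunion, Finset.card_range]
  by_contra hcon
  push_neg at hcon
  have h1 : C1.card * C2.card ≤ K * M := le_trans hinj hsum
  rcases le_total C1.card C2.card with hle | hle
  · rw [min_eq_left hle] at hcon; nlinarith
  · rw [min_eq_right hle] at hcon; nlinarith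




/-- Window start. -/
def Sg (a d T₀ γ : ℕ) : ℕ := (a+d)*γ + a*(2*T₀)

lemma Sg_def (a d T₀ γ : ℕ) : Sg a d T₀ γ = (a+d)*γ + a*(2*T₀) := rfl

/-- First multiple of `d` at or after the window start. -/
def qg (a d T₀ γ : ℕ) : ℕ := Sg a d T₀ γ + ((d - Sg a d T₀ γ % d) % d)

lemma qg_dvd (a d T₀ γ : ℕ) (hd : 1 ≤ d) : d ∣ qg a d T₀ γ := by
  unfold qg
  set S := Sg a d T₀ γ
  have h1 : S % d < d := Nat.mod_lt _ hd
  rcases Nat.eq_zero_or_pos (S % d) with h0 | h0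
  · have : (d - S % d) % d = 0 := by rw [h0, Nat.sub_zero, Nat.mod_self]
    rw [this, Nat.add_zero]
    exact Nat.dvd_of_mod_eq_zero h0
  · have h2 : d - S % d < d := by omega
    have h3 : (d - S % d) % d = d - S % d := Nat.mod_eq_of_lt h2
    rw [h3]
    have : (S + (d - S % d)) % d = 0 := by
      rw [Nat.add_mod, h3]
      have h4 : S % d + (d - S % d) = d := by omega
      rw [h4, Nat.mod_self]
    exact Nat.dvd_of_mod_eq_zero this

lemma qg_ge (a d T₀ γ : ℕ) : Sg a d T₀ γ ≤ qg a d T₀ γ := Nat.le_add_right _ _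

lemma qg_lt (a d T₀ γ : ℕ) (hd : 1 ≤ d) : qg a d T₀ γ < Sg a d T₀ γ + d := by
  unfold qg
  have : (d - Sg a d T₀ γ % d) % d < d := Nat.mod_lt _ hd
  omega

/-- Every far multiple of `d` in the window is of the form `qg + d*s`. -/
lemma mem_class (a d T₀ γ w : ℕ) (hd : 1 ≤ d) (hw : d ∣ w)
    (h1 : Sg a d T₀ γ ≤ w) (h2 : w < Sg a d T₀ γ + 2*d*T₀) :
    ∃ s, s < 2*T₀ ∧ w = qg a d T₀ γ + d*s := by
  have hq : d ∣ qg a d T₀ γ := qg_dvd a d T₀ γ hd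
  have hqw : qg a d T₀ γ ≤ w := by
    by_contra hcon
    push_neg at hcon
    have h3 : w < Sg a d T₀ γ + d := lt_trans hcon (qg_lt a d T₀ γ hd)
    have h4 : d ∣ (qg a d T₀ γ - w) := Nat.dvd_sub hq hw
    have h5 : 0 < qg a d T₀ γ - w := by omega
    have h6 : qg a d T₀ γ - w < d := by
      have := qg_lt a d T₀ γ hd
      omega
    rcases h4 with ⟨k, hk⟩
    rcases k with _ | k
    · omega
    · have : d ≤ d * (k+1) := Nat.le_mul_of_pos_right d (Nat.succ_pos k)
      omega
  have h7 : d ∣ (w - qg a d T₀ γ) := Nat.dvd_sub hw hq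
  rcases h7 with ⟨s, hs⟩
  refine ⟨s, ?_, by omega⟩
  have h8 : w - qg a d T₀ γ < 2*d*T₀ := by
    have := qg_ge a d T₀ γ
    omega
  rw [hs] at h8
  by_contra hcon
  push_neg at hcon
  have : d * (2*T₀) ≤ d * s := Nat.mul_le_mul_left d hcon
  have h9 : 2*d*T₀ = d * (2*T₀) := by ring
  omega



/-- Few disagreements between `φ w` and `φ (w + d*t)` on far windows. -/
lemma windowE (φ : ℕ → ℕ) (hφ : ∀ n, φ n = 1 ∨ φ n = 2) (a d r T₀ Γh : ℕ)
    (hAgr : ∀ γ, Γh ≤ γ → ((Finset.range (2*d*T₀ + (a+d)*(2*T₀))).filter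
        (fun x => φ (x + a*γ) = φ (x + (a+d)*γ))).card ≤ 2*r)
    (t γ : ℕ) (ht1 : 1 ≤ t) (ht2 : t ≤ 2*T₀) (hγ : Γh ≤ γ) :
    ((Finset.Ico (Sg a d T₀ γ) (Sg a d T₀ γ + 2*d*T₀)).filter
        (fun w => φ w ≠ φ (w + d*t))).card ≤ 4*r := by
  set N := 2*d*T₀ + (a+d)*(2*T₀) with hN
  set Agr1 := (Finset.range N).filter (fun x => φ (x + a*γ) = φ (x + (a+d)*γ)) with hA1
  set Agr2 := (Finset.range N).filter
      (fun x => φ (x + a*(γ+t)) = φ (x + (a+d)*(γ+t))) with hA2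
  have hsub : (Finset.Ico (Sg a d T₀ γ) (Sg a d T₀ γ + 2*d*T₀)).filter
      (fun w => φ w ≠ φ (w + d*t))
      ⊆ (Agr1.image (fun y => y + (a+d)*γ)) ∪ (Agr2.image (fun x => x + (a+d)*γ + a*t)) := by
    intro w hw
    simp only [Finset.mem_filter, Finset.mem_Ico] at hw
    obtain ⟨⟨hw1, hw2⟩, hw3⟩ := hw
    -- w = (a+d)*γ + a*t + x
    have hS : Sg a d T₀ γ = (a+d)*γ + a*(2*T₀) := Sg_def a d T₀ γ
    have hat : a*t ≤ a*(2*T₀) := Nat.mul_le_mul_left a ht2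
    have hx : ∃ x, w = (a+d)*γ + a*t + x := ⟨w - ((a+d)*γ + a*t), by omega⟩
    obtain ⟨x, hxw⟩ := hx
    have hxN : x + a*t < N := by
      have e1 : a*(2*T₀) + 2*d*T₀ ≤ N := by
        have : (a+d)*(2*T₀) = a*(2*T₀) + d*(2*T₀) := by ring
        have e2 : 2*d*T₀ = d*(2*T₀) := by ring
        omega
      omega
    by_cases hcase1 : φ ((x + a*t) + a*γ) = φ ((x + a*t) + (a+d)*γ)
    · apply Finset.mem_union_left
      apply Finset.mem_image.mpr
      refine ⟨x + a*t, ?_, by omega⟩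
      rw [hA1, Finset.mem_filter, Finset.mem_range]
      exact ⟨hxN, hcase1⟩
    · by_cases hcase2 : φ (x + a*(γ+t)) = φ (x + (a+d)*(γ+t))
      · apply Finset.mem_union_right
        apply Finset.mem_image.mpr
        refine ⟨x, ?_, by omega⟩
        rw [hA2, Finset.mem_filter, Finset.mem_range]
        exact ⟨by omega, hcase2⟩
      · exfalso
        -- both fail: derive φ w = φ (w + d*t)
        have e1 : (x + a*t) + (a+d)*γ = w := by omega
        have e2 : x + a*(γ+t) = (x + a*t) + a*γ := by ring
        have e3 : x + (a+d)*(γ+t) = w + d*t := by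
          have : x + (a+d)*(γ+t) = x + (a+d)*γ + a*t + d*t := by ring
          omega
        rw [e2, e3] at hcase2
        rw [e1] at hcase1
        rcases hφ ((x + a*t) + a*γ) with h1 | h1 <;>
          rcases hφ w with h2 | h2 <;> rcases hφ (w + d*t) with h3 | h3 <;> omega
  calc ((Finset.Ico (Sg a d T₀ γ) (Sg a d T₀ γ + 2*d*T₀)).filter
      (fun w => φ w ≠ φ (w + d*t))).card
      ≤ _ := Finset.card_le_card hsub
    _ ≤ (Agr1.image (fun y => y + (a+d)*γ)).card
        + (Agr2.image (fun x => x + (a+d)*γ + a*t)).card := Finset.card_union_le _ _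
    _ ≤ Agr1.card + Agr2.card :=
        Nat.add_le_add Finset.card_image_le Finset.card_image_le
    _ ≤ 2*r + 2*r := Nat.add_le_add (hAgr γ hγ) (hAgr (γ+t) (by omega))
    _ = 4*r := by ring


/-- The majority value of `φ` on the class-0 positions in window `γ`. -/
noncomputable def Vg (φ : ℕ → ℕ) (a d r T₀ Γh γ : ℕ) : ℕ :=
  if 8*r < ((Finset.range (2*T₀)).filter (fun s => φ (qg a d T₀ γ + d*s) = 1)).card
  then 1 else 2

lemma Vg_mem (φ : ℕ → ℕ) (a d r T₀ Γh γ : ℕ) :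
    Vg φ a d r T₀ Γh γ = 1 ∨ Vg φ a d r T₀ Γh γ = 2 := by
  unfold Vg; split_ifs <;> simp

section
variable (φ : ℕ → ℕ) (a d r T₀ Γh : ℕ)

/-- Per-shift disagreement bound on class-0 positions. -/
lemma classE (hφ : ∀ n, φ n = 1 ∨ φ n = 2) (hd : 1 ≤ d)
    (hAgr : ∀ γ, Γh ≤ γ → ((Finset.range (2*d*T₀ + (a+d)*(2*T₀))).filter
        (fun x => φ (x + a*γ) = φ (x + (a+d)*γ))).card ≤ 2*r)
    (γ : ℕ) (hγ : Γh ≤ γ) (u : ℕ) (hu1 : 1 ≤ u) (hu2 : u < 2*T₀) :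
    ((Finset.range (2*T₀)).filter (fun s => s + u < 2*T₀ ∧
      φ (qg a d T₀ γ + d*s) ≠ φ (qg a d T₀ γ + d*(s+u)))).card ≤ 4*r := by
  have hW := windowE φ hφ a d r T₀ Γh hAgr u γ hu1 (by omega) hγ
  refine le_trans (Finset.card_le_card_of_injOn (fun s => qg a d T₀ γ + d*s) ?_ ?_) hW
  · intro s hs
    simp only [Finset.mem_coe, Finset.mem_filter, Finset.mem_range] at hs
    obtain ⟨hs1, hs2, hs3⟩ := hs
    simp only [Finset.mem_coe, Finset.mem_filter, Finset.mem_Ico]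
    have hge := qg_ge a d T₀ γ
    have hlt := qg_lt a d T₀ γ hd
    have hds : d*s ≤ d*(2*T₀ - 1) := Nat.mul_le_mul_left d (by omega)
    have h2d : 2*d*T₀ = d*(2*T₀-1) + d := by
      have h1 : d*(2*T₀-1) + d = d*(2*T₀-1+1) := by ring
      rw [h1]
      have : 2*T₀ - 1 + 1 = 2*T₀ := by omega
      rw [this]; ring
    refine ⟨⟨by omega, by omega⟩, ?_⟩
    have e : qg a d T₀ γ + d*s + d*u = qg a d T₀ γ + d*(s+u) := by ring
    rw [e]; exact hs3
  · intro s _ s' _ h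
    simp only at h
    have h2 : d*s = d*s' := by omega
    exact Nat.eq_of_mul_eq_mul_left hd h2

/-- Exceptions relative to the majority value: at most `8r` per window. -/
lemma W1 (hφ : ∀ n, φ n = 1 ∨ φ n = 2) (hd : 1 ≤ d)
    (hAgr : ∀ γ, Γh ≤ γ → ((Finset.range (2*d*T₀ + (a+d)*(2*T₀))).filter
        (fun x => φ (x + a*γ) = φ (x + (a+d)*γ))).card ≤ 2*r)
    (γ : ℕ) (hγ : Γh ≤ γ) :
    ((Finset.range (2*T₀)).filter
      (fun s => φ (qg a d T₀ γ + d*s) ≠ Vg φ a d r T₀ Γh γ)).card ≤ 8*r := by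
  have hmin := minority (fun s => φ (qg a d T₀ γ + d*s)) (2*T₀) (4*r)
      (fun s _ => hφ _)
      (fun u hu1 hu2 => classE φ a d r T₀ Γh hφ hd hAgr γ hγ u hu1 hu2)
  set c1 := ((Finset.range (2*T₀)).filter (fun s => φ (qg a d T₀ γ + d*s) = 1)).card with hc1
  set c2 := ((Finset.range (2*T₀)).filter (fun s => φ (qg a d T₀ γ + d*s) = 2)).card with hc2
  unfold Vg
  rw [← hc1]
  split_ifs with hV
  · have hle : c2 ≤ 8*r := by omega
    refine le_trans (le_of_eq ?_) hle
    rw [hc2]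
    congr 1
    apply Finset.filter_congr
    intro s _
    rcases hφ (qg a d T₀ γ + d*s) with h | h <;> simp [h]
  · have hle : c1 ≤ 8*r := by omega
    refine le_trans (le_of_eq ?_) hle
    rw [hc1]
    congr 1
    apply Finset.filter_congr
    intro s _
    rcases hφ (qg a d T₀ γ + d*s) with h | h <;> simp [h]

end


section
variable (φ : ℕ → ℕ) (a d r T₀ Γh : ℕ)

/-- Patching: consecutive windows have the same majority value. -/
lemma W2 (hφ : ∀ n, φ n = 1 ∨ φ n = 2) (hd : 1 ≤ d)
    (hAgr : ∀ γ, Γh ≤ γ → ((Finset.range (2*d*T₀ + (a+d)*(2*T₀))).filter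
        (fun x => φ (x + a*γ) = φ (x + (a+d)*γ))).card ≤ 2*r)
    (hT16 : 16*r < T₀) (hT2 : a + 2*d + 2 ≤ T₀)
    (γ : ℕ) (hγ : Γh ≤ γ) :
    Vg φ a d r T₀ Γh (γ+1) = Vg φ a d r T₀ Γh γ := by
  by_contra hne
  -- q (γ+1) = q γ + d*δ₀ with δ₀ ≤ a + 2d
  have hS : Sg a d T₀ (γ+1) = Sg a d T₀ γ + (a+d) := by
    rw [Sg_def, Sg_def]; ring
  have hql : qg a d T₀ γ < qg a d T₀ (γ+1) := by
    have h1 := qg_lt a d T₀ γ hd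
    have h2 := qg_ge a d T₀ (γ+1)
    omega
  have hqu : qg a d T₀ (γ+1) < qg a d T₀ γ + (a + 2*d) := by
    have h1 := qg_lt a d T₀ (γ+1) hd
    have h2 := qg_ge a d T₀ γ
    omega
  have hdvd : d ∣ (qg a d T₀ (γ+1) - qg a d T₀ γ) :=
    Nat.dvd_sub (qg_dvd a d T₀ (γ+1) hd) (qg_dvd a d T₀ γ hd)
  obtain ⟨δ₀, hδ⟩ := hdvd
  have hq1 : qg a d T₀ (γ+1) = qg a d T₀ γ + d*δ₀ := by omega
  have hδle : δ₀ ≤ a + 2*d := by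
    have : d*δ₀ < a + 2*d := by omega
    by_contra hcon
    push_neg at hcon
    have : d*(a+2*d) ≤ d*δ₀ := Nat.mul_le_mul_left d (by omega)
    have h2 : a + 2*d ≤ d*(a+2*d) := Nat.le_mul_of_pos_left _ hd
    omega
  -- A1: first T₀ positions of window γ+1 disagreeing with Vg γ
  set A1 := (Finset.range T₀).filter
      (fun s => φ (qg a d T₀ (γ+1) + d*s) ≠ Vg φ a d r T₀ Γh γ) with hA1
  set A2 := (Finset.range T₀).filter
      (fun s => φ (qg a d T₀ (γ+1) + d*s) ≠ Vg φ a d r T₀ Γh (γ+1)) with hA2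
  have hA1c : A1.card ≤ 8*r := by
    have hW := W1 φ a d r T₀ Γh hφ hd hAgr γ hγ
    refine le_trans (Finset.card_le_card_of_injOn (fun s => δ₀ + s) ?_ ?_) hW
    · intro s hs
      simp only [Finset.mem_coe, hA1, Finset.mem_filter, Finset.mem_range] at hs
      simp only [Finset.mem_coe, Finset.mem_filter, Finset.mem_range]
      refine ⟨by omega, ?_⟩
      have e : qg a d T₀ γ + d*(δ₀ + s) = qg a d T₀ (γ+1) + d*s := by
        rw [hq1]; ring
      rw [e]
      exact hs.2
    · intro s _ s' _ h
      simp only at h; omega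
  have hA2c : A2.card ≤ 8*r := by
    have hW := W1 φ a d r T₀ Γh hφ hd hAgr (γ+1) (by omega)
    refine le_trans (Finset.card_le_card ?_) hW
    intro s hs
    simp only [hA2, Finset.mem_filter, Finset.mem_range] at hs
    simp only [Finset.mem_filter, Finset.mem_range]
    exact ⟨by omega, hs.2⟩
  have hcov : Finset.range T₀ ⊆ A1 ∪ A2 := by
    intro s hs
    rw [Finset.mem_union, hA1, hA2]
    simp only [Finset.mem_filter]
    by_cases h : φ (qg a d T₀ (γ+1) + d*s) = Vg φ a d r T₀ Γh γ
    · right; exact ⟨hs, by rw [h]; exact fun hc => hne hc.symm⟩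
    · left; exact ⟨hs, h⟩
  have := Finset.card_le_card hcov
  have hU := Finset.card_union_le A1 A2
  rw [Finset.card_range] at this
  omega

/-- All far windows share one majority value. -/
lemma Vconst (hφ : ∀ n, φ n = 1 ∨ φ n = 2) (hd : 1 ≤ d)
    (hAgr : ∀ γ, Γh ≤ γ → ((Finset.range (2*d*T₀ + (a+d)*(2*T₀))).filter
        (fun x => φ (x + a*γ) = φ (x + (a+d)*γ))).card ≤ 2*r)
    (hT16 : 16*r < T₀) (hT2 : a + 2*d + 2 ≤ T₀)
    (γ : ℕ) (hγ : Γh ≤ γ) :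
    Vg φ a d r T₀ Γh γ = Vg φ a d r T₀ Γh Γh := by
  induction γ, hγ using Nat.le_induction with
  | base => rfl
  | succ n hn ih =>
      rw [W2 φ a d r T₀ Γh hφ hd hAgr hT16 hT2 n hn, ih]

/-- Few "bad" multiples of `d` in any covered interval. -/
lemma badCount (hφ : ∀ n, φ n = 1 ∨ φ n = 2) (hd : 1 ≤ d)
    (hAgr : ∀ γ, Γh ≤ γ → ((Finset.range (2*d*T₀ + (a+d)*(2*T₀))).filter
        (fun x => φ (x + a*γ) = φ (x + (a+d)*γ))).card ≤ 2*r)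
    (hT16 : 16*r < T₀) (hT2 : a + 2*d + 2 ≤ T₀)
    (A L : ℕ) (hA : a*(2*T₀) + (a+d)*(Γh+1) ≤ A) (hL : L + (a+d) ≤ 2*d*T₀) :
    ((Finset.Ico A (A+L)).filter
      (fun w => d ∣ w ∧ φ w ≠ Vg φ a d r T₀ Γh Γh)).card ≤ 8*r := by
  have hb1 : 1 ≤ a + d := by omega
  set γc := (A - a*(2*T₀)) / (a+d) with hγc
  have hgc1 : Γh + 1 ≤ γc := by
    rw [hγc, Nat.le_div_iff_mul_le hb1]
    have h1 : (Γh+1)*(a+d) = (a+d)*(Γh+1) := by ring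
    omega
  have hmod := Nat.div_add_mod (A - a*(2*T₀)) (a+d)
  have hmlt : (A - a*(2*T₀)) % (a+d) < a+d := Nat.mod_lt _ hb1
  rw [← hγc] at hmod
  have hSeq : Sg a d T₀ γc = (a+d)*γc + a*(2*T₀) := Sg_def a d T₀ γc
  have hSle : Sg a d T₀ γc ≤ A := by omega
  have hSgt : A < Sg a d T₀ γc + (a+d) := by omega
  have hΓγc : Γh ≤ γc := by omega
  have hVc := Vconst φ a d r T₀ Γh hφ hd hAgr hT16 hT2 γc hΓγc
  have hW := W1 φ a d r T₀ Γh hφ hd hAgr γc hΓγc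
  rw [hVc] at hW
  have hsub : (Finset.Ico A (A+L)).filter (fun w => d ∣ w ∧ φ w ≠ Vg φ a d r T₀ Γh Γh)
      ⊆ ((Finset.range (2*T₀)).filter
          (fun s => φ (qg a d T₀ γc + d*s) ≠ Vg φ a d r T₀ Γh Γh)).image
          (fun s => qg a d T₀ γc + d*s) := by
    intro w hw
    simp only [Finset.mem_filter, Finset.mem_Ico] at hw
    obtain ⟨⟨hw1, hw2⟩, hw3, hw4⟩ := hw
    obtain ⟨s, hs1, hs2⟩ := mem_class a d T₀ γc w hd hw3 (by omega) (by omega)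
    apply Finset.mem_image.mpr
    refine ⟨s, ?_, hs2.symm⟩
    simp only [Finset.mem_filter, Finset.mem_range]
    exact ⟨hs1, by rw [← hs2]; exact hw4⟩
  calc ((Finset.Ico A (A+L)).filter
      (fun w => d ∣ w ∧ φ w ≠ Vg φ a d r T₀ Γh Γh)).card
      ≤ _ := Finset.card_le_card hsub
    _ ≤ ((Finset.range (2*T₀)).filter
          (fun s => φ (qg a d T₀ γc + d*s) ≠ Vg φ a d r T₀ Γh Γh)).card :=
        Finset.card_image_le
    _ ≤ 8*r := hW

end


section
variable (φ : ℕ → ℕ) (a d r T₀ Γh : ℕ)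

/-- One dilate side: few candidate indices `m` are spoiled. -/
lemma sideBound (hφ : ∀ n, φ n = 1 ∨ φ n = 2) (hd : 1 ≤ d)
    (hAgr : ∀ γ, Γh ≤ γ → ((Finset.range (2*d*T₀ + (a+d)*(2*T₀))).filter
        (fun x => φ (x + a*γ) = φ (x + (a+d)*γ))).card ≤ 2*r)
    (hT16 : 16*r < T₀) (hT2 : a + 2*d + 2 ≤ T₀)
    (hT3 : 9*r*d + (a+d)*(d*(16*r*r+1)) + 1 + (a+d) ≤ 2*d*T₀)
    (X : ℕ) (hX : a*(2*T₀) + (a+d)*(Γh+1) ≤ X)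
    (sB : Finset ℕ) (hsB9 : ∀ s ∈ sB, s < 9*r) (hsBr : sB.card ≤ r)
    (c : ℕ) (hc1 : 1 ≤ c) (hc2 : c ≤ a+d) :
    ((Finset.range (16*r*r+1)).filter (fun m => ∃ s ∈ sB,
        φ (qg a d T₀ Γh + d*s + c*(d*X + d*m)) ≠ Vg φ a d r T₀ Γh Γh)).card
      ≤ r * (8*r) := by
  set i₀ := Vg φ a d r T₀ Γh Γh with hi₀
  set Ncand := 16*r*r+1 with hNc
  set q0 := qg a d T₀ Γh with hq0
  have hsub : ((Finset.range Ncand).filter (fun m => ∃ s ∈ sB,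
        φ (q0 + d*s + c*(d*X + d*m)) ≠ i₀))
      ⊆ sB.biUnion (fun s => (Finset.range Ncand).filter
          (fun m => φ (q0 + d*s + c*(d*X + d*m)) ≠ i₀)) := by
    intro m hm
    simp only [Finset.mem_filter, Finset.mem_range] at hm
    obtain ⟨hm1, s, hs1, hs2⟩ := hm
    apply Finset.mem_biUnion.mpr
    exact ⟨s, hs1, by simp only [Finset.mem_filter, Finset.mem_range]; exact ⟨hm1, hs2⟩⟩
  refine le_trans (le_trans (Finset.card_le_card hsub) Finset.card_biUnion_le) ?_
  have hd0 : 0 < d := hd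
  have hc0 : 0 < c := hc1
  have hper : ∀ s ∈ sB, ((Finset.range Ncand).filter
      (fun m => φ (q0 + d*s + c*(d*X + d*m)) ≠ i₀)).card ≤ 8*r := by
    intro s hs
    have hs9 := hsB9 s hs
    set A := q0 + c*(d*X) with hA'
    set L := 9*r*d + c*(d*Ncand) + 1 with hL'
    have hbc := badCount φ a d r T₀ Γh hφ hd hAgr hT16 hT2 A L
      (by
        have h1 : X ≤ d*X := Nat.le_mul_of_pos_left X hd0
        have h2 : d*X ≤ c*(d*X) := Nat.le_mul_of_pos_left _ hc0
        omega)
      (by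
        have h1 : c*(d*Ncand) ≤ (a+d)*(d*Ncand) := Nat.mul_le_mul_right _ hc2
        have h2 : (a+d)*(d*Ncand) = (a+d)*(d*(16*r*r+1)) := by rw [hNc]
        omega)
    refine le_trans (Finset.card_le_card_of_injOn
        (fun m => q0 + d*s + c*(d*X + d*m)) ?_ ?_) hbc
    · intro m hm
      simp only [Finset.mem_coe, Finset.mem_filter, Finset.mem_range] at hm
      obtain ⟨hm1, hm2⟩ := hm
      simp only [Finset.mem_coe, Finset.mem_filter, Finset.mem_Ico]
      have e1 : c*(d*X + d*m) = c*(d*X) + (c*d)*m := by ring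
      have hds : d*s < d*(9*r) := by
        exact (mul_lt_mul_of_pos_left hs9 hd0 : d*s < d*(9*r))
      have e2 : d*(9*r) = 9*r*d := by ring
      have hcm : (c*d)*m < (c*d)*Ncand := by
        have : (0:ℕ) < c*d := Nat.mul_pos hc0 hd0
        exact mul_lt_mul_of_pos_left hm1 this
      have e3 : (c*d)*Ncand = c*(d*Ncand) := by ring
      refine ⟨⟨by omega, by omega⟩, ?_, hm2⟩
      · -- d ∣ w
        have h1 : d ∣ q0 := qg_dvd a d T₀ Γh hd
        have h2 : d ∣ d*s := Dvd.intro s rfl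
        have h3 : d ∣ c*(d*X + d*m) := by
          have e : c*(d*X + d*m) = d*(c*(X+m)) := by ring
          rw [e]
          exact Dvd.intro _ rfl
        exact dvd_add (dvd_add h1 h2) h3
    · intro m _ m' _ h
      simp only at h
      have e1 : c*(d*X + d*m) = c*(d*X) + (c*d)*m := by ring
      have e1' : c*(d*X + d*m') = c*(d*X) + (c*d)*m' := by ring
      have h2 : (c*d)*m = (c*d)*m' := by omega
      exact Nat.eq_of_mul_eq_mul_left (Nat.mul_pos hc0 hd0) h2
  calc ∑ s ∈ sB, ((Finset.range Ncand).filter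
        (fun m => φ (q0 + d*s + c*(d*X + d*m)) ≠ i₀)).card
      ≤ ∑ s ∈ sB, 8*r := Finset.sum_le_sum hper
    _ = sB.card * (8*r) := by rw [Finset.sum_const, smul_eq_mul]
    _ ≤ r * (8*r) := Nat.mul_le_mul_right _ hsBr

/-- The main construction: a monochromatic configuration with `|B| = r`. -/
lemma construct (hφ : ∀ n, φ n = 1 ∨ φ n = 2) (hd : 1 ≤ d)
    (hAgr : ∀ γ, Γh ≤ γ → ((Finset.range (2*d*T₀ + (a+d)*(2*T₀))).filter
        (fun x => φ (x + a*γ) = φ (x + (a+d)*γ))).card ≤ 2*r)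
    (hT16 : 16*r < T₀) (hT2 : a + 2*d + 2 ≤ T₀)
    (hT3 : 9*r*d + (a+d)*(d*(16*r*r+1)) + 1 + (a+d) ≤ 2*d*T₀) :
    ∃ (B : Finset ℕ) (i : ℕ), B.card = r ∧ (i = 1 ∨ i = 2) ∧
      {γ : ℕ | ∀ β ∈ B, φ (β + a*γ) = i ∧ φ (β + (a+d)*γ) = i}.Infinite := by
  have hd0 : 0 < d := hd
  set i₀ := Vg φ a d r T₀ Γh Γh with hi₀
  set q0 := qg a d T₀ Γh with hq0
  -- pool of good class-0 positions in the base window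
  set pool := (Finset.range (9*r)).filter (fun s => φ (q0 + d*s) = i₀) with hpool
  have hpoolc : r ≤ pool.card := by
    have hW := W1 φ a d r T₀ Γh hφ hd hAgr Γh le_rfl
    rw [← hi₀, ← hq0] at hW
    have hcompl : (Finset.range (9*r)).filter (fun s => ¬ φ (q0 + d*s) = i₀)
        ⊆ (Finset.range (2*T₀)).filter (fun s => φ (q0 + d*s) ≠ i₀) := by
      intro s hs
      simp only [Finset.mem_filter, Finset.mem_range] at hs ⊢
      exact ⟨by omega, hs.2⟩
    have h1 := Finset.card_filter_add_card_filter_not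
      (s := Finset.range (9*r)) (p := fun s => φ (q0 + d*s) = i₀)
    have h2 := Finset.card_le_card hcompl
    rw [Finset.card_range] at h1
    rw [← hpool] at h1
    omega
  obtain ⟨sB, hsB, hsBc⟩ := Finset.exists_subset_card_eq hpoolc
  have hsB9 : ∀ s ∈ sB, s < 9*r := by
    intro s hs
    have := hsB hs
    simp only [hpool, Finset.mem_filter, Finset.mem_range] at this
    exact this.1
  have hsBval : ∀ s ∈ sB, φ (q0 + d*s) = i₀ := by
    intro s hs
    have := hsB hs
    simp only [hpool, Finset.mem_filter] at this
    exact this.2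
  set B := sB.image (fun s => q0 + d*s) with hB
  have hBc : B.card = r := by
    rw [hB, Finset.card_image_of_injOn, hsBc]
    intro s _ s' _ h
    simp only at h
    have h2 : d*s = d*s' := by omega
    exact Nat.eq_of_mul_eq_mul_left hd0 h2
  refine ⟨B, i₀, hBc, Vg_mem φ a d r T₀ Γh Γh, ?_⟩
  apply infinite_of_forall_ge
  intro G
  set X := G + a*(2*T₀) + (a+d)*(Γh + 1) + 1 with hX
  set Ncand := 16*r*r+1 with hNc
  have hXbig : a*(2*T₀) + (a+d)*(Γh+1) ≤ X := by omega
  set BadP := (Finset.range Ncand).filter (fun m => ∃ s ∈ sB,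
      φ (q0 + d*s + a*(d*X + d*m)) ≠ i₀) with hBadP
  set BadQ := (Finset.range Ncand).filter (fun m => ∃ s ∈ sB,
      φ (q0 + d*s + (a+d)*(d*X + d*m)) ≠ i₀) with hBadQ
  have hsBr : sB.card ≤ r := le_of_eq hsBc
  have hQc : BadQ.card ≤ r * (8*r) :=
    sideBound φ a d r T₀ Γh hφ hd hAgr hT16 hT2 hT3 X hXbig sB hsB9 hsBr
      (a+d) (by omega) le_rfl
  have hPc : BadP.card ≤ r * (8*r) := by
    rcases Nat.eq_zero_or_pos a with ha | ha
    · have : BadP = ∅ := by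
        rw [hBadP]
        apply Finset.filter_false_of_mem
        intro m _
        push_neg
        intro s hs
        have e : q0 + d*s + a*(d*X + d*m) = q0 + d*s := by rw [ha]; ring
        rw [e]
        exact hsBval s hs
      rw [this, Finset.card_empty]
      exact Nat.zero_le _
    · exact sideBound φ a d r T₀ Γh hφ hd hAgr hT16 hT2 hT3 X hXbig sB hsB9 hsBr
        a ha (by omega)
  have hmex : ∃ m, m ∈ Finset.range Ncand ∧ m ∉ BadP ∪ BadQ := by
    by_contra hcon
    push_neg at hcon
    have hsub : Finset.range Ncand ⊆ BadP ∪ BadQ := fun m hm => hcon m hm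
    have h1 := Finset.card_le_card hsub
    have h2 := Finset.card_union_le BadP BadQ
    rw [Finset.card_range] at h1
    have : Ncand = 16*r*r+1 := hNc
    nlinarith
  obtain ⟨m, hmR, hmB⟩ := hmex
  rw [Finset.mem_union, not_or] at hmB
  obtain ⟨hmP, hmQ⟩ := hmB
  refine ⟨d*X + d*m, ?_, ?_⟩
  · -- G ≤ γ
    have h1 : X ≤ d*X := Nat.le_mul_of_pos_left X hd0
    omega
  · -- membership in the good set
    intro β hβ
    rw [hB] at hβ
    obtain ⟨s, hs, rfl⟩ := Finset.mem_image.mp hβ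
    constructor
    · -- a-side
      rcases Nat.eq_zero_or_pos a with ha | ha
      · have e : q0 + d*s + a*(d*X + d*m) = q0 + d*s := by rw [ha]; ring
        rw [e]
        exact hsBval s hs
      · rw [hBadP, Finset.mem_filter] at hmP
        push_neg at hmP
        exact hmP hmR s hs
    · -- (a+d)-side
      rw [hBadQ, Finset.mem_filter] at hmQ
      push_neg at hmQ
      exact hmQ hmR s hs

end


/-- If all candidate configurations are finite, agreement columns are rare. -/
lemma L1fin (φ : ℕ → ℕ) (a d r : ℕ) (hφ : ∀ n, φ n = 1 ∨ φ n = 2)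
    (hfin : ∀ (B : Finset ℕ) (i : ℕ), B.card = r → (i = 1 ∨ i = 2) →
      {γ : ℕ | ∀ β ∈ B, φ (β + a*γ) = i ∧ φ (β + (a+d)*γ) = i}.Finite)
    (N : ℕ) :
    {γ : ℕ | 2*r+1 ≤ ((Finset.range N).filter
      (fun x => φ (x + a*γ) = φ (x + (a+d)*γ))).card}.Finite := by
  by_contra hinf
  have hS : Set.Infinite {γ : ℕ | 2*r+1 ≤ ((Finset.range N).filter
      (fun x => φ (x + a*γ) = φ (x + (a+d)*γ))).card} := hinf
  set S := {γ : ℕ | 2*r+1 ≤ ((Finset.range N).filter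
      (fun x => φ (x + a*γ) = φ (x + (a+d)*γ))).card} with hSdef
  have hex : ∀ γ ∈ S, ∃ p : Finset ℕ × ℕ, p.1 ⊆ Finset.range N ∧ p.1.card = r ∧
      (p.2 = 1 ∨ p.2 = 2) ∧ ∀ x ∈ p.1, φ (x + a*γ) = p.2 ∧ φ (x + (a+d)*γ) = p.2 := by
    intro γ hγ
    have hcard : 2*r+1 ≤ ((Finset.range N).filter
        (fun x => φ (x + a*γ) = φ (x + (a+d)*γ))).card := hγ
    set Agr := (Finset.range N).filter
        (fun x => φ (x + a*γ) = φ (x + (a+d)*γ)) with hAgrDef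
    set F1 := Agr.filter (fun x => φ (x + a*γ) = 1) with hF1
    set F2 := Agr.filter (fun x => φ (x + a*γ) = 2) with hF2
    have hcov : Agr ⊆ F1 ∪ F2 := by
      intro x hx
      rcases hφ (x + a*γ) with h | h
      · exact Finset.mem_union_left _ (Finset.mem_filter.mpr ⟨hx, h⟩)
      · exact Finset.mem_union_right _ (Finset.mem_filter.mpr ⟨hx, h⟩)
    have hsplit : r ≤ F1.card ∨ r ≤ F2.card := by
      have h1 := Finset.card_le_card hcov
      have h2 := Finset.card_union_le F1 F2
      omega
    rcases hsplit with h | h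
    · obtain ⟨B, hB1, hB2⟩ := Finset.exists_subset_card_eq h
      refine ⟨(B, 1), ?_, hB2, Or.inl rfl, ?_⟩
      · intro x hx
        have h1 : x ∈ Agr := Finset.mem_of_mem_filter x (hB1 hx)
        rw [hAgrDef] at h1
        exact Finset.mem_of_mem_filter x h1
      · intro x hx
        have hx1 := hB1 hx
        rw [hF1, Finset.mem_filter] at hx1
        obtain ⟨hxA, hx2⟩ := hx1
        rw [hAgrDef, Finset.mem_filter] at hxA
        exact ⟨hx2, by rw [← hxA.2]; exact hx2⟩
    · obtain ⟨B, hB1, hB2⟩ := Finset.exists_subset_card_eq h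
      refine ⟨(B, 2), ?_, hB2, Or.inr rfl, ?_⟩
      · intro x hx
        have h1 : x ∈ Agr := Finset.mem_of_mem_filter x (hB1 hx)
        rw [hAgrDef] at h1
        exact Finset.mem_of_mem_filter x h1
      · intro x hx
        have hx1 := hB1 hx
        rw [hF2, Finset.mem_filter] at hx1
        obtain ⟨hxA, hx2⟩ := hx1
        rw [hAgrDef, Finset.mem_filter] at hxA
        exact ⟨hx2, by rw [← hxA.2]; exact hx2⟩
  classical
  set f : ℕ → Finset ℕ × ℕ := fun γ =>
    if h : ∃ p : Finset ℕ × ℕ, p.1 ⊆ Finset.range N ∧ p.1.card = r ∧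
        (p.2 = 1 ∨ p.2 = 2) ∧ ∀ x ∈ p.1, φ (x + a*γ) = p.2 ∧ φ (x + (a+d)*γ) = p.2
    then h.choose else (∅, 0) with hfdef
  have hfF : ∀ γ ∈ S, f γ ∈ (Finset.range N).powerset ×ˢ ({1, 2} : Finset ℕ) := by
    intro γ hγ
    rw [hfdef]
    simp only
    rw [dif_pos (hex γ hγ)]
    obtain ⟨h1, h2, h3, h4⟩ := (hex γ hγ).choose_spec
    rw [Finset.mem_product]
    constructor
    · exact Finset.mem_powerset.mpr h1
    · rcases h3 with h | h <;> simp [h]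
  obtain ⟨c, hcF, hfib⟩ := inf_fiber hS f _ hfF
  obtain ⟨γ₀, hγ₀S, hγ₀c⟩ := hfib.nonempty
  have hspec : ∀ γ ∈ S, f γ = c → (c.1.card = r ∧ (c.2 = 1 ∨ c.2 = 2) ∧
      ∀ x ∈ c.1, φ (x + a*γ) = c.2 ∧ φ (x + (a+d)*γ) = c.2) := by
    intro γ hγ hfc
    have h := (hex γ hγ).choose_spec
    rw [hfdef] at hfc
    simp only at hfc
    rw [dif_pos (hex γ hγ)] at hfc
    rw [hfc] at h
    exact ⟨h.2.1, h.2.2.1, h.2.2.2⟩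
  have hcard : c.1.card = r := (hspec γ₀ hγ₀S hγ₀c).1
  have hcol : c.2 = 1 ∨ c.2 = 2 := (hspec γ₀ hγ₀S hγ₀c).2.1
  have hsub : {γ | γ ∈ S ∧ f γ = c} ⊆
      {γ : ℕ | ∀ β ∈ c.1, φ (β + a*γ) = c.2 ∧ φ (β + (a+d)*γ) = c.2} := by
    rintro γ ⟨h1, h2⟩
    exact (hspec γ h1 h2).2.2
  exact (hfin c.1 c.2 hcard hcol).not_infinite (hfib.mono hsub)

/-- Main auxiliary result in additive form. -/
lemma main_aux (φ : ℕ → ℕ) (hφ : ∀ n, φ n = 1 ∨ φ n = 2) (a d r : ℕ) (hd : 1 ≤ d) :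
    ∃ (B : Finset ℕ) (i : ℕ), B.card = r ∧ (i = 1 ∨ i = 2) ∧
      {γ : ℕ | ∀ β ∈ B, φ (β + a*γ) = i ∧ φ (β + (a+d)*γ) = i}.Infinite := by
  by_cases H : ∃ (B : Finset ℕ) (i : ℕ), B.card = r ∧ (i = 1 ∨ i = 2) ∧
      {γ : ℕ | ∀ β ∈ B, φ (β + a*γ) = i ∧ φ (β + (a+d)*γ) = i}.Infinite
  · exact H
  have hfin : ∀ (B : Finset ℕ) (i : ℕ), B.card = r → (i = 1 ∨ i = 2) →
      {γ : ℕ | ∀ β ∈ B, φ (β + a*γ) = i ∧ φ (β + (a+d)*γ) = i}.Finite := by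
    intro B i h1 h2
    by_contra h3
    exact H ⟨B, i, h1, h2, h3⟩
  set T₀ := 9*r*d + (a+d)*(d*(16*r*r+1)) + 1 + (a+d) + 16*r + a + 2*d + 3 with hT₀
  have hT16 : 16*r < T₀ := by omega
  have hT2 : a + 2*d + 2 ≤ T₀ := by omega
  have hT3 : 9*r*d + (a+d)*(d*(16*r*r+1)) + 1 + (a+d) ≤ 2*d*T₀ := by
    have h1 : T₀ ≤ (2*d)*T₀ := Nat.le_mul_of_pos_left T₀ (by omega)
    have h2 : (2*d)*T₀ = 2*d*T₀ := by ring
    omega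
  have hA := L1fin φ a d r hφ hfin (2*d*T₀ + (a+d)*(2*T₀))
  obtain ⟨n, hn⟩ := hA.bddAbove
  have hAgr : ∀ γ, n+1 ≤ γ → ((Finset.range (2*d*T₀ + (a+d)*(2*T₀))).filter
      (fun x => φ (x + a*γ) = φ (x + (a+d)*γ))).card ≤ 2*r := by
    intro γ hγ
    by_contra hcon
    push_neg at hcon
    have hmem : γ ∈ {γ : ℕ | 2*r+1 ≤ ((Finset.range (2*d*T₀ + (a+d)*(2*T₀))).filter
        (fun x => φ (x + a*γ) = φ (x + (a+d)*γ))).card} := by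
      simp only [Set.mem_setOf_eq]
      omega
    have := hn hmem
    omega
  exact absurd (construct φ a d r T₀ (n+1) hφ hd hAgr hT16 hT2 hT3) H


end MonoSS


/-- For any `r ∈ ℕ`, distinct naturals `a b`, and any 2-coloring
`φ : ℕ → {1,2}`, there are `B C ⊆ ℕ` with `|B| = r`, `C` infinite, and a color
`i ∈ {1,2}` such that `φ` equals `i` on `B + aC` and on `B + bC`. -/
theorem monochromatic_two_sumsets (r a b : ℕ) (hab : a ≠ b)
    (φ : ℕ → ℕ) (hφ : ∀ n, φ n = 1 ∨ φ n = 2) :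
    ∃ (B C : Set ℕ) (i : ℕ), B.ncard = r ∧ C.Infinite ∧ (i = 1 ∨ i = 2) ∧
      (∀ β ∈ B, ∀ γ ∈ C, φ (β + a * γ) = i) ∧
      (∀ β ∈ B, ∀ γ ∈ C, φ (β + b * γ) = i) := by
  rcases Nat.lt_or_ge a b with h | h
  · obtain ⟨B, i, h1, h2, h3⟩ := MonoSS.main_aux φ hφ a (b - a) r (by omega)
    have hba : a + (b - a) = b := by omega
    rw [hba] at h3
    refine ⟨↑B, {γ | ∀ β ∈ B, φ (β + a*γ) = i ∧ φ (β + b*γ) = i}, i, ?_, h3, h2, ?_, ?_⟩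
    · rw [Set.ncard_coe_finset, h1]
    · intro β hβ γ hγ
      exact (hγ β (Finset.mem_coe.mp hβ)).1
    · intro β hβ γ hγ
      exact (hγ β (Finset.mem_coe.mp hβ)).2
  · have hba : b < a := by omega
    obtain ⟨B, i, h1, h2, h3⟩ := MonoSS.main_aux φ hφ b (a - b) r (by omega)
    have hab' : b + (a - b) = a := by omega
    rw [hab'] at h3
    refine ⟨↑B, {γ | ∀ β ∈ B, φ (β + b*γ) = i ∧ φ (β + a*γ) = i}, i, ?_, h3, h2, ?_, ?_⟩
    · rw [Set.ncard_coe_finset, h1]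
    · intro β hβ γ hγ
      exact (hγ β (Finset.mem_coe.mp hβ)).2
    · intro β hβ γ hγ
      exact (hγ β (Finset.mem_coe.mp hβ)).1
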